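/- Let h₁, h₂, h₃ be irreducible power series in ℂ{x,y} co-prime to x. Then the contact satisfies the strong triangle inequality: cont(h₁,h₂) ≥ min(cont(h₁,h₃), cont(h₂,h₃)). -/

import Mathlib

noncomputable section

open Polynomial

set_option maxHeartbeats 1000000
set_option synthInstance.maxHeartbeats 400000

abbrev KK := HahnSeries ℚ ℂ

/-- the character `q ↦ exp(2πiq)` -/
def chi (q : ℚ) : ℂ := Complex.exp (2 * Real.pi * Complex.I * q)

lemma chi_zero : chi 0 = 1 := by simp [chi]
lemma chi_add (a b : ℚ) : chi (a + b) = chi a * chi b := by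
  rw [chi, chi, chi, ← Complex.exp_add]; push_cast; ring_nf
lemma chi_ne_zero (q : ℚ) : chi q ≠ 0 := Complex.exp_ne_zero _
lemma chi_intCast (n : ℤ) : chi (n : ℚ) = 1 := by
  rw [chi]
  have : 2 * (Real.pi:ℂ) * Complex.I * (n:ℚ) = n * (2 * Real.pi * Complex.I) := by push_cast; ring
  rw [this, Complex.exp_int_mul_two_pi_mul_I]
lemma chi_eq_one {q : ℚ} (h : chi q = 1) : ∃ n : ℤ, (n : ℚ) = q := by
  rw [chi, Complex.exp_eq_one_iff] at h
  obtain ⟨n, hn⟩ := h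
  refine ⟨n, ?_⟩
  have h2 : (2 * (Real.pi:ℂ) * Complex.I) ≠ 0 := by
    simp [Real.pi_ne_zero, Complex.I_ne_zero, Complex.ofReal_ne_zero]
  have hq : (q:ℂ) = (n:ℂ) := by
    have h3 : 2 * (Real.pi:ℂ) * Complex.I * (q:ℂ) = 2 * (Real.pi:ℂ) * Complex.I * (n:ℂ) := by
      rw [hn]; ring
    exact mul_left_cancel₀ h2 h3
  exact_mod_cast hq.symm

/-- twist a Hahn series coefficientwise by `chi` -/
def twistFun (f : KK) : KK where
  coeff q := chi q * f.coeff q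
  isPWO_support' := by
    have : Function.support (fun q => chi q * f.coeff q) = f.support := by
      ext q; simp [Function.mem_support, chi_ne_zero q]
    rw [this]; exact f.isPWO_support'

@[simp] lemma twistFun_coeff (f : KK) (q : ℚ) : (twistFun f).coeff q = chi q * f.coeff q := rfl

lemma twistFun_support (f : KK) : (twistFun f).support = f.support := by
  ext q; simp [HahnSeries.mem_support, chi_ne_zero q]

lemma addAntidiagonal_congr' {s t s' t' : Set ℚ} (hs : s.IsPWO) (ht : t.IsPWO)
    (hs' : s'.IsPWO) (ht' : t'.IsPWO) (h1 : s = s') (h2 : t = t') (a : ℚ) :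
    Finset.antidiagonal hs ht a = Finset.antidiagonal hs' ht' a := by
  subst h1; subst h2; rfl

/-- The twist as a ring homomorphism. -/
def sigma : KK →+* KK where
  toFun := twistFun
  map_one' := by
    ext q
    rcases eq_or_ne q 0 with rfl | hq
    · simp [chi_zero]
    · simp [HahnSeries.coeff_one, hq]
  map_mul' f g := by
    ext q
    rw [twistFun_coeff, HahnSeries.coeff_mul, HahnSeries.coeff_mul]
    rw [addAntidiagonal_congr' (twistFun f).isPWO_support (twistFun g).isPWO_support
      f.isPWO_support g.isPWO_support (twistFun_support f) (twistFun_support g) q]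
    rw [Finset.mul_sum]
    refine Finset.sum_congr rfl ?_
    rintro ⟨i, j⟩ hij
    rw [Finset.mem_antidiagonal] at hij
    obtain ⟨-, -, hij3⟩ := hij
    simp only [twistFun_coeff]
    rw [← hij3, chi_add]; ring
  map_zero' := by ext q; simp
  map_add' f g := by ext q; simp [mul_add]

@[simp] lemma sigma_coeff (f : KK) (q : ℚ) : (sigma f).coeff q = chi q * f.coeff q := rfl

lemma sigma_support (f : KK) : (sigma f).support = f.support := twistFun_support f

lemma orderTop_congr {f g : KK} (h : f.support = g.support) : f.orderTop = g.orderTop := by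
  rcases eq_or_ne f 0 with rfl | hf
  · have : g = 0 := by
      rw [← HahnSeries.support_eq_empty_iff, ← h, HahnSeries.support_zero]
    rw [this]
  · have hg : g ≠ 0 := by
      intro hg0
      apply hf
      rw [← HahnSeries.support_eq_empty_iff, h, hg0, HahnSeries.support_zero]
    rw [HahnSeries.orderTop_of_ne_zero hf, HahnSeries.orderTop_of_ne_zero hg]
    have key : ∀ (s t : Set ℚ) (hs : s.IsWF) (ht : t.IsWF) (hns : s.Nonempty)
        (hnt : t.Nonempty), s = t → hs.min hns = ht.min hnt := by
      rintro s t hs ht hns hnt rfl; rfl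
    have heq := key f.support g.support f.isWF_support g.isWF_support
      (HahnSeries.support_nonempty_iff.2 hf) (HahnSeries.support_nonempty_iff.2 hg) h
    rw [heq]

lemma sigma_orderTop (f : KK) : (sigma f).orderTop = f.orderTop :=
  orderTop_congr (sigma_support f)

lemma ofPowerSeries_coeff_notin (x : PowerSeries ℂ) (q : ℚ)
    (hq : q ∉ Set.range ((↑) : ℕ → ℚ)) : (HahnSeries.ofPowerSeries ℚ ℂ x).coeff q = 0 := by
  rw [HahnSeries.ofPowerSeries_apply]
  exact HahnSeries.embDomain_notin_range (by simpa using hq)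

lemma sigma_ofPowerSeries (x : PowerSeries ℂ) :
    sigma (HahnSeries.ofPowerSeries ℚ ℂ x) = HahnSeries.ofPowerSeries ℚ ℂ x := by
  ext q
  rw [sigma_coeff]
  by_cases hq : q ∈ Set.range ((↑) : ℕ → ℚ)
  · obtain ⟨n, rfl⟩ := hq
    have : chi (n : ℚ) = 1 := by exact_mod_cast chi_intCast (n : ℤ)
    rw [this, one_mul]
  · rw [ofPowerSeries_coeff_notin x q hq, mul_zero]

lemma sigma_root (h : Polynomial (PowerSeries ℂ)) (γ : KK)
    (hγ : Polynomial.eval₂ (HahnSeries.ofPowerSeries ℚ ℂ) γ h = 0) :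
    Polynomial.eval₂ (HahnSeries.ofPowerSeries ℚ ℂ) (sigma γ) h = 0 := by
  have := Polynomial.hom_eval₂ h (HahnSeries.ofPowerSeries ℚ ℂ) sigma γ
  rw [hγ, map_zero] at this
  have hcomp : sigma.comp (HahnSeries.ofPowerSeries ℚ ℂ) = HahnSeries.ofPowerSeries ℚ ℂ :=
    RingHom.ext sigma_ofPowerSeries
  rw [hcomp] at this
  exact this.symm

/-- embedding of Laurent series into rational-exponent Hahn series -/
def iota : LaurentSeries ℂ →+* KK :=
  HahnSeries.embDomainRingHom (Int.castAddHom ℚ) Int.cast_injective (fun _ _ => Int.cast_le)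

lemma iota_coeff_int (g : LaurentSeries ℂ) (m : ℤ) : (iota g).coeff (m : ℚ) = g.coeff m :=
  HahnSeries.embDomain_coeff

lemma iota_coeff_notin (g : LaurentSeries ℂ) (q : ℚ) (hq : q ∉ Set.range ((↑) : ℤ → ℚ)) :
    (iota g).coeff q = 0 := by
  refine HahnSeries.embDomain_notin_range ?_
  rintro ⟨m, hm⟩
  exact hq ⟨m, hm⟩

lemma iota_ofPowerSeries (x : PowerSeries ℂ) :
    iota (HahnSeries.ofPowerSeries ℤ ℂ x) = HahnSeries.ofPowerSeries ℚ ℂ x := by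
  ext q
  by_cases hq : q ∈ Set.range ((↑) : ℤ → ℚ)
  · obtain ⟨m, rfl⟩ := hq
    rw [iota_coeff_int]
    rcases le_or_gt 0 m with hm | hm
    · obtain ⟨n, rfl⟩ := Int.eq_ofNat_of_zero_le hm
      have h1 : (HahnSeries.ofPowerSeries ℤ ℂ x).coeff ((n : ℤ)) = PowerSeries.coeff n x :=
        HahnSeries.ofPowerSeries_apply_coeff x n
      have h2 : (HahnSeries.ofPowerSeries ℚ ℂ x).coeff ((n : ℚ)) = PowerSeries.coeff n x :=
        HahnSeries.ofPowerSeries_apply_coeff x n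
      rw [h1]
      rw [show (((n : ℤ)) : ℚ) = (n : ℚ) by push_cast; ring, h2]
    · have h1 : (HahnSeries.ofPowerSeries ℤ ℂ x).coeff m = 0 := by
        rw [HahnSeries.ofPowerSeries_apply]
        refine HahnSeries.embDomain_notin_range ?_
        rintro ⟨n, hn⟩
        have hn' : (n : ℤ) = m := hn
        omega
      have h2 : (HahnSeries.ofPowerSeries ℚ ℂ x).coeff ((m : ℚ)) = 0 := by
        refine ofPowerSeries_coeff_notin x _ ?_
        rintro ⟨n, hn⟩
        have hmn : (m : ℚ) = ((n : ℤ) : ℚ) := by rw [← hn]; push_cast; ring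
        have hmn' : m = (n : ℤ) := by exact_mod_cast hmn
        omega
      rw [h1, h2]
  · rw [iota_coeff_notin _ _ hq, ofPowerSeries_coeff_notin]
    rintro ⟨n, hn⟩
    exact hq ⟨(n : ℤ), by rw [← hn]; push_cast; ring⟩

lemma iota_injective : Function.Injective iota := HahnSeries.embDomain_injective

/-- descent: a `sigma`-fixed Hahn series comes from a Laurent series -/
lemma exists_iota_eq {f : KK} (hf : sigma f = f) : ∃ g : LaurentSeries ℂ, iota g = f := by
  have hsupp : ∀ q ∈ f.support, ∃ m : ℤ, (m : ℚ) = q := by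
    intro q hq
    have h1 : chi q * f.coeff q = f.coeff q := by
      conv_rhs => rw [← hf]
      rfl
    have h2 : f.coeff q ≠ 0 := hq
    have h3 : chi q = 1 := by
      by_contra hne
      have h4 : (chi q - 1) * f.coeff q = 0 := by
        rw [sub_mul, one_mul, h1, sub_self]
      rcases mul_eq_zero.mp h4 with h | h
      · exact hne (sub_eq_zero.mp h)
      · exact h2 h
    exact chi_eq_one h3
  refine ⟨⟨fun m => f.coeff (m : ℚ), ?_⟩, ?_⟩
  · rw [Set.IsPWO, Set.partiallyWellOrderedOn_iff_exists_lt]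
    intro u hu
    obtain ⟨i, j, hij, hle⟩ := (Set.partiallyWellOrderedOn_iff_exists_lt.mp f.isPWO_support') (fun k => ((u k : ℤ) : ℚ)) (fun k => hu k)
    exact ⟨i, j, hij, by exact_mod_cast hle⟩
  · ext q
    by_cases hq : q ∈ Set.range ((↑) : ℤ → ℚ)
    · obtain ⟨m, rfl⟩ := hq
      exact iota_coeff_int _ m
    · rw [iota_coeff_notin _ _ hq]
      by_contra hne
      obtain ⟨m, hm⟩ := hsupp q (Ne.symm hne)
      exact hq ⟨m, hm⟩

lemma sigma_injective : Function.Injective sigma := sigma.injective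

lemma sigma_iterate_root (h : Polynomial (PowerSeries ℂ)) (γ : KK)
    (hγ : Polynomial.eval₂ (HahnSeries.ofPowerSeries ℚ ℂ) γ h = 0) (k : ℕ) :
    Polynomial.eval₂ (HahnSeries.ofPowerSeries ℚ ℂ) (sigma^[k] γ) h = 0 := by
  induction k with
  | zero => simpa using hγ
  | succ n ih => rw [Function.iterate_succ_apply']; exact sigma_root h _ ih

lemma sigma_iterate_sub (k : ℕ) (a b : KK) :
    sigma^[k] (a - b) = sigma^[k] a - sigma^[k] b := by
  induction k with
  | zero => simp
  | succ n ih => simp only [Function.iterate_succ_apply', ih, map_sub]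

lemma sigma_iterate_orderTop (k : ℕ) (a : KK) : (sigma^[k] a).orderTop = a.orderTop := by
  induction k with
  | zero => simp
  | succ n ih => rw [Function.iterate_succ_apply', sigma_orderTop, ih]

/-- Transitivity of the conjugation orbit on roots of an irreducible polynomial. -/
lemma orbit_trans (h : Polynomial (PowerSeries ℂ)) (hirr : Irreducible h) (γ γ' : KK)
    (hγ : Polynomial.eval₂ (HahnSeries.ofPowerSeries ℚ ℂ) γ h = 0)
    (hγ' : Polynomial.eval₂ (HahnSeries.ofPowerSeries ℚ ℂ) γ' h = 0)
    (Z : Finset KK)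
    (hZ : ∀ δ, δ ∈ Z ↔ Polynomial.eval₂ (HahnSeries.ofPowerSeries ℚ ℂ) δ h = 0) :
    ∃ k : ℕ, γ' = sigma^[k] γ := by
  classical
  -- degree is positive
  have hdeg : h.natDegree ≠ 0 := by
    intro h0
    obtain ⟨a, rfl⟩ := Polynomial.natDegree_eq_zero.mp h0
    rw [Polynomial.eval₂_C] at hγ
    have ha : (HahnSeries.ofPowerSeries ℚ ℂ) a = (HahnSeries.ofPowerSeries ℚ ℂ) 0 := by
      rw [map_zero]; exact hγ
    have : a = 0 := HahnSeries.ofPowerSeries_injective ha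
    rw [this] at hirr
    exact hirr.ne_zero (map_zero _)
  -- primitivity
  have hprim : h.IsPrimitive := by
    intro r hr
    obtain ⟨q, hq⟩ := hr
    rcases hirr.isUnit_or_isUnit hq with hu | hu
    · exact Polynomial.isUnit_C.mp hu
    · exfalso
      obtain ⟨r', hr', hq'⟩ := Polynomial.isUnit_iff.mp hu
      apply hdeg
      rw [hq, ← hq', ← Polynomial.C_mul, Polynomial.natDegree_C]
  -- pigeonhole for a period
  have hmem : ∀ k : ℕ, sigma^[k] γ ∈ Z := fun k => (hZ _).2 (sigma_iterate_root h γ hγ k)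
  obtain ⟨i, j, hne, heq⟩ := Finite.exists_ne_map_eq_of_infinite
    (fun k : ℕ => (⟨sigma^[k] γ, hmem k⟩ : {x // x ∈ Z}))
  have heq' : sigma^[i] γ = sigma^[j] γ := congrArg Subtype.val heq
  -- wlog i < j
  obtain ⟨i, j, hij, heqij⟩ : ∃ i j : ℕ, i < j ∧ sigma^[i] γ = sigma^[j] γ := by
    rcases lt_or_gt_of_ne hne with hlt | hgt
    · exact ⟨i, j, hlt, heq'⟩
    · exact ⟨j, i, hgt, heq'.symm⟩
  set N := j - i with hNdef
  have hN : 0 < N := Nat.sub_pos_of_lt hij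
  have hper : sigma^[N] γ = γ := by
    have h1 : sigma^[i] (sigma^[N] γ) = sigma^[i] γ := by
      rw [← Function.iterate_add_apply]
      rw [show i + N = j by omega] at *
      exact heqij.symm
    exact (Function.Injective.iterate sigma_injective i) h1
  -- the orbit
  set T : Finset KK := (Finset.range N).image (fun k => sigma^[k] γ) with hTdef
  have hγT : γ ∈ T := by
    refine Finset.mem_image.mpr ⟨0, Finset.mem_range.mpr hN, rfl⟩
  have hTmap : ∀ δ ∈ T, sigma δ ∈ T := by
    intro δ hδ
    obtain ⟨k, hk, rfl⟩ := Finset.mem_image.mp hδ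
    rw [Finset.mem_range] at hk
    rw [← Function.iterate_succ_apply' sigma k γ]
    rcases eq_or_lt_of_le (Nat.succ_le_of_lt hk) with hk1 | hk1
    · rw [hk1, hper]; exact hγT
    · exact Finset.mem_image.mpr ⟨k + 1, Finset.mem_range.mpr hk1, rfl⟩
  have himg : T.image sigma = T := by
    apply Finset.eq_of_subset_of_card_le
    · intro x hx
      obtain ⟨δ, hδ, rfl⟩ := Finset.mem_image.mp hx
      exact hTmap δ hδ
    · rw [Finset.card_image_of_injective _ sigma_injective]
  -- the invariant polynomial
  set P : Polynomial KK := ∏ δ ∈ T, (Polynomial.X - Polynomial.C δ) with hPdef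
  have hPmap : P.map sigma = P := by
    rw [hPdef, Polynomial.map_prod]
    simp only [Polynomial.map_sub, Polynomial.map_X, Polynomial.map_C]
    rw [← Finset.prod_image (f := fun δ => Polynomial.X - Polynomial.C δ)
      (g := sigma) (fun x _ y _ hxy => sigma_injective hxy), himg]
  have hfix : ∀ n, sigma (P.coeff n) = P.coeff n := by
    intro n
    conv_rhs => rw [← hPmap]
    rw [Polynomial.coeff_map]
  -- descend P to Laurent series
  have hlift : P ∈ Polynomial.lifts iota := by
    rw [Polynomial.lifts_iff_coeff_lifts]
    intro n
    obtain ⟨g, hg⟩ := exists_iota_eq (hfix n)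
    exact ⟨g, hg⟩
  obtain ⟨P₀, hP₀⟩ := (Polynomial.mem_lifts _).mp hlift
  -- Gauss' lemma
  letI : NormalizedGCDMonoid (PowerSeries ℂ) := Classical.choice inferInstance
  have hirrL : Irreducible (h.map (algebraMap (PowerSeries ℂ) (LaurentSeries ℂ))) :=
    (hprim.irreducible_iff_irreducible_map_fraction_map (K := LaurentSeries ℂ)).mp hirr
  have hcomp : iota.comp (algebraMap (PowerSeries ℂ) (LaurentSeries ℂ))
      = HahnSeries.ofPowerSeries ℚ ℂ :=
    RingHom.ext fun x => iota_ofPowerSeries x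
  -- evaluations
  have hevalh : ∀ δ : KK, Polynomial.eval₂ (HahnSeries.ofPowerSeries ℚ ℂ) δ h = 0 →
      Polynomial.eval₂ iota δ (h.map (algebraMap (PowerSeries ℂ) (LaurentSeries ℂ))) = 0 := by
    intro δ hδ
    rw [Polynomial.eval₂_map, hcomp]
    exact hδ
  have hevalPγ : Polynomial.eval₂ iota γ P₀ = 0 := by
    rw [← Polynomial.eval_map, hP₀, hPdef, Polynomial.eval_prod]
    exact Finset.prod_eq_zero hγT (by simp)
  -- divisibility
  haveI : IsPrincipalIdealRing (Polynomial (LaurentSeries ℂ)) :=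
    EuclideanDomain.to_principal_ideal_domain (R := Polynomial (LaurentSeries ℂ))
  have hdvd : h.map (algebraMap (PowerSeries ℂ) (LaurentSeries ℂ)) ∣ P₀ := by
    by_contra hndvd
    obtain ⟨a, b, hab⟩ := (hirrL.coprime_iff_not_dvd).mpr hndvd
    have := congrArg (Polynomial.eval₂RingHom iota γ) hab
    simp only [map_add, map_mul, map_one, Polynomial.coe_eval₂RingHom] at this
    rw [hevalh γ hγ, hevalPγ, mul_zero, mul_zero, add_zero] at this
    exact zero_ne_one this
  -- γ' is a root of P
  obtain ⟨c, hc⟩ := hdvd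
  have hPγ' : Polynomial.eval γ' P = 0 := by
    have : P = Polynomial.map iota (h.map (algebraMap (PowerSeries ℂ) (LaurentSeries ℂ)))
        * Polynomial.map iota c := by
      rw [← Polynomial.map_mul, ← hc, hP₀]
    rw [this, Polynomial.eval_mul]
    have h1 : Polynomial.eval γ'
        (Polynomial.map iota (h.map (algebraMap (PowerSeries ℂ) (LaurentSeries ℂ)))) = 0 := by
      rw [Polynomial.eval_map]
      exact hevalh γ' hγ'
    rw [h1, zero_mul]
  rw [hPdef, Polynomial.eval_prod] at hPγ'
  obtain ⟨δ, hδT, hδ⟩ := Finset.prod_eq_zero_iff.mp hPγ'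
  simp only [Polynomial.eval_sub, Polynomial.eval_X, Polynomial.eval_C, sub_eq_zero] at hδ
  obtain ⟨k, _, rfl⟩ := Finset.mem_image.mp hδT
  exact ⟨k, hδ⟩

/-- The contact `cont(A,B) = max { ord_x(α - β) : α ∈ A, β ∈ B }` between two (nonempty,
finite) sets of fractional power series, valued in `WithTop ℚ` (the value `⊤` occurring
when some `α = β`). -/
def contactSets (A B : Finset (HahnSeries ℚ ℂ)) (hA : A.Nonempty) (hB : B.Nonempty) :
    WithTop ℚ :=
  (A ×ˢ B).sup' (hA.product hB) fun p => (p.1 - p.2).orderTop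

/-- Strong triangle inequality for the contact: if `h₁, h₂, h₃` are irreducible power
series in `ℂ{x,y}` co-prime to `x` (formalized as irreducible Weierstrass-type polynomials
over formal power series, some coefficient being a unit power series), with Newton–Puiseux
root sets `Z₁, Z₂, Z₃`, then `cont(h₁,h₂) ≥ min(cont(h₁,h₃), cont(h₂,h₃))`. -/
theorem contact_strong_triangle_inequality
    (h₁ h₂ h₃ : Polynomial (PowerSeries ℂ))
    (hirr₁ : Irreducible h₁) (hirr₂ : Irreducible h₂) (hirr₃ : Irreducible h₃)
    (hx₁ : ∃ j, PowerSeries.constantCoeff (h₁.coeff j) ≠ 0)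
    (hx₂ : ∃ j, PowerSeries.constantCoeff (h₂.coeff j) ≠ 0)
    (hx₃ : ∃ j, PowerSeries.constantCoeff (h₃.coeff j) ≠ 0)
    (Z₁ Z₂ Z₃ : Finset (HahnSeries ℚ ℂ))
    (hZ₁ : ∀ γ, γ ∈ Z₁ ↔ Polynomial.eval₂ (HahnSeries.ofPowerSeries ℚ ℂ) γ h₁ = 0)
    (hZ₂ : ∀ γ, γ ∈ Z₂ ↔ Polynomial.eval₂ (HahnSeries.ofPowerSeries ℚ ℂ) γ h₂ = 0)
    (hZ₃ : ∀ γ, γ ∈ Z₃ ↔ Polynomial.eval₂ (HahnSeries.ofPowerSeries ℚ ℂ) γ h₃ = 0)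
    (hne₁ : Z₁.Nonempty) (hne₂ : Z₂.Nonempty) (hne₃ : Z₃.Nonempty) :
    min (contactSets Z₁ Z₃ hne₁ hne₃) (contactSets Z₂ Z₃ hne₂ hne₃)
      ≤ contactSets Z₁ Z₂ hne₁ hne₂ := by
  classical
  obtain ⟨⟨α, γ⟩, hmem13, hp13⟩ := Finset.exists_mem_eq_sup' (hne₁.product hne₃)
    (fun p : HahnSeries ℚ ℂ × HahnSeries ℚ ℂ => (p.1 - p.2).orderTop)
  obtain ⟨⟨β, γ'⟩, hmem23, hp23⟩ := Finset.exists_mem_eq_sup' (hne₂.product hne₃)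
    (fun p : HahnSeries ℚ ℂ × HahnSeries ℚ ℂ => (p.1 - p.2).orderTop)
  rw [Finset.mem_product] at hmem13 hmem23
  obtain ⟨hα, hγ⟩ := hmem13
  obtain ⟨hβ, hγ'⟩ := hmem23
  obtain ⟨k, hk⟩ := orbit_trans h₃ hirr₃ γ γ' ((hZ₃ γ).1 hγ) ((hZ₃ γ').1 hγ') Z₃ hZ₃
  set α' := sigma^[k] α with hα'def
  have hα' : α' ∈ Z₁ := (hZ₁ _).2 (sigma_iterate_root h₁ α ((hZ₁ α).1 hα) k)
  have hord1 : (α' - γ').orderTop = (α - γ).orderTop := by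
    rw [hk, hα'def, ← sigma_iterate_sub, sigma_iterate_orderTop]
  have hle : min ((α' - γ').orderTop) ((γ' - β).orderTop) ≤ (α' - β).orderTop := by
    have := HahnSeries.min_orderTop_le_orderTop_add (x := α' - γ') (y := γ' - β)
    rwa [sub_add_sub_cancel] at this
  have h2 : (γ' - β).orderTop = (β - γ').orderTop := by
    rw [← HahnSeries.orderTop_neg (x := β - γ'), neg_sub]
  have hfin : (α' - β).orderTop ≤ contactSets Z₁ Z₂ hne₁ hne₂ := by
    have hb : (α', β) ∈ Z₁ ×ˢ Z₂ := Finset.mem_product.mpr ⟨hα', hβ⟩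
    have := Finset.le_sup' (f := fun p : HahnSeries ℚ ℂ × HahnSeries ℚ ℂ =>
      (p.1 - p.2).orderTop) hb
    simpa only [contactSets] using this
  calc min (contactSets Z₁ Z₃ hne₁ hne₃) (contactSets Z₂ Z₃ hne₂ hne₃)
      = min ((α - γ).orderTop) ((β - γ').orderTop) := by
        simp only [contactSets]; rw [hp13, hp23]
    _ = min ((α' - γ').orderTop) ((γ' - β).orderTop) := by rw [hord1, h2]
    _ ≤ (α' - β).orderTop := hle
    _ ≤ contactSets Z₁ Z₂ hne₁ hne₂ := hfin

end
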